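/- Fix s ∈ (0,1). As T → ∞ over the integers, (1/(T−1)) · Σ_{k=1}^{T−1} g(⌊Ts⌋/T, k/T)² / m(k/T) converges to −[ s² log s + (1−s)² log(1−s) + m(s) ]. That is, for the heteroscedasticity weights w_k = m(k/T)^{−2}, the quantity h_T(s; w) converges to h_wls(s) = −[s² log s + (1−s)² log(1−s) + m(s)]. -/

import Mathlib

open Filter Finset Real

/-- `m(s) = s(1-s)`. -/
noncomputable def m (s : ℝ) : ℝ := s * (1 - s)

/-- `g(s,t) = min(s,t)·(1 - max(s,t))`. -/
noncomputable def g (s t : ℝ) : ℝ := min s t * (1 - max s t)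

private noncomputable def nn (s : ℝ) (T : ℕ) : ℕ := (⌊(T : ℝ) * s⌋).toNat
private noncomputable def aa (s : ℝ) (T : ℕ) : ℝ := (nn s T : ℝ) / T
private noncomputable def AA (s : ℝ) (T : ℕ) : ℝ := ∑ k ∈ Finset.Ioc 0 (nn s T), ((T : ℝ) - k)⁻¹
private noncomputable def BB (s : ℝ) (T : ℕ) : ℝ := ∑ k ∈ Finset.Ioc (nn s T) (T - 1), (k : ℝ)⁻¹

private lemma nn_cast {s : ℝ} (hs : 0 ≤ s) (T : ℕ) : ((nn s T : ℕ) : ℝ) = (⌊(T : ℝ) * s⌋ : ℝ) := by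
  have h : (0 : ℤ) ≤ ⌊(T : ℝ) * s⌋ := Int.floor_nonneg.2 (by positivity)
  rw [nn]
  exact_mod_cast congrArg (fun z : ℤ => (z : ℝ)) (Int.toNat_of_nonneg h)

private lemma tendsto_aa {s : ℝ} (hs : s ∈ Set.Ioo (0:ℝ) 1) :
    Tendsto (aa s) atTop (nhds s) := by
  have h1 : Tendsto (fun T : ℕ => s - 1 / (T : ℝ)) atTop (nhds s) := by
    simpa using tendsto_const_nhds.sub (tendsto_one_div_atTop_nhds_zero_nat (𝕜 := ℝ))
  refine tendsto_of_tendsto_of_tendsto_of_le_of_le' h1 tendsto_const_nhds ?_ ?_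
  · filter_upwards [eventually_gt_atTop 0] with T hT
    have hT' : (0:ℝ) < T := by exact_mod_cast hT
    rw [aa, nn_cast hs.1.le, le_div_iff₀ hT']
    have h := Int.sub_one_lt_floor ((T:ℝ) * s)
    have : (s - 1 / (T:ℝ)) * T = (T:ℝ) * s - 1 := by field_simp
    linarith
  · filter_upwards [eventually_gt_atTop 0] with T hT
    have hT' : (0:ℝ) < T := by exact_mod_cast hT
    rw [aa, nn_cast hs.1.le, div_le_iff₀ hT']
    have := Int.floor_le ((T:ℝ) * s)
    linarith

private lemma ev_nn {s : ℝ} (hs : s ∈ Set.Ioo (0:ℝ) 1) :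
    ∀ᶠ T : ℕ in atTop, 2 ≤ nn s T ∧ nn s T + 2 ≤ T := by
  obtain ⟨hs0, hs1⟩ := hs
  have h2 : Tendsto (fun T : ℕ => (T : ℝ)) atTop atTop := tendsto_natCast_atTop_atTop
  filter_upwards [h2.eventually_ge_atTop (2 / s), h2.eventually_ge_atTop (2 / (1 - s))]
    with T hT1 hT2
  have hT0 : (0:ℝ) < T := lt_of_lt_of_le (by positivity) hT1
  have h1s : (0:ℝ) < 1 - s := by linarith
  constructor
  · have h2Ts : (2:ℝ) ≤ (T:ℝ) * s := by
      rw [div_le_iff₀ hs0] at hT1; linarith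
    have : (2:ℤ) ≤ ⌊(T:ℝ) * s⌋ := Int.le_floor.2 (by exact_mod_cast h2Ts)
    simp only [nn]; omega
  · have h2T : (2:ℝ) ≤ (T:ℝ) * (1 - s) := by
      rw [div_le_iff₀ h1s] at hT2; linarith
    have hfl : (⌊(T:ℝ) * s⌋ : ℝ) ≤ (T:ℝ) - 2 := by
      have := Int.floor_le ((T:ℝ) * s); nlinarith
    have hfl' : ⌊(T:ℝ) * s⌋ ≤ (T : ℤ) - 2 := by exact_mod_cast hfl
    have h0 : (0:ℤ) ≤ ⌊(T:ℝ) * s⌋ := Int.floor_nonneg.2 (by positivity)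
    simp only [nn]; omega

/-- closed form for the sum -/
private lemma sum_eq {s : ℝ} (hs : s ∈ Set.Ioo (0:ℝ) 1) {T : ℕ}
    (h2 : 2 ≤ nn s T) (hT : nn s T + 2 ≤ T) :
    ∑ k ∈ Finset.Icc 1 (T - 1),
        (g ((⌊(T : ℝ) * s⌋ : ℝ) / T) ((k : ℝ) / T)) ^ 2 / m ((k : ℝ) / T)
      = (1 - aa s T)^2 * ((T:ℝ) * AA s T - nn s T)
        + (aa s T)^2 * ((T:ℝ) * BB s T - ((T:ℝ) - 1 - nn s T)) := by
  set n := nn s T with hn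
  have hTpos : (0:ℝ) < T := by
    have : 0 < T := by omega
    exact_mod_cast this
  have hcast : ((⌊(T : ℝ) * s⌋ : ℤ) : ℝ) = (n : ℝ) := (nn_cast hs.1.le T).symm
  have hnT : (n:ℝ) + 2 ≤ T := by exact_mod_cast hT
  have hIcc : Finset.Icc 1 (T - 1) = Finset.Ioc 0 (T - 1) := by
    rw [← Finset.Icc_add_one_left_eq_Ioc]; rfl
  rw [hIcc, ← Finset.sum_Ioc_consecutive _ (Nat.zero_le n) (by omega : n ≤ T - 1)]
  have hsum1 : ∑ k ∈ Finset.Ioc 0 n,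
      (g ((⌊(T : ℝ) * s⌋ : ℝ) / T) ((k : ℝ) / T)) ^ 2 / m ((k : ℝ) / T)
      = ∑ k ∈ Finset.Ioc 0 n, (1 - aa s T)^2 * ((T:ℝ) * ((T:ℝ) - k)⁻¹ - 1) := by
    refine Finset.sum_congr rfl fun k hk => ?_
    simp only [Finset.mem_Ioc] at hk
    have hk0 : (0:ℝ) < k := by exact_mod_cast hk.1
    have hkn : (k:ℝ) ≤ n := by exact_mod_cast hk.2
    have hkT : (k:ℝ) < T := by linarith
    have hTk : (T:ℝ) - k ≠ 0 := by linarith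
    have h1k : (0:ℝ) < 1 - (k:ℝ)/T := by
      rw [sub_pos, div_lt_one hTpos]; exact hkT
    rw [hcast, g, m, aa, min_eq_right (by gcongr), max_eq_left (by gcongr)]
    rw [div_eq_iff (by positivity)]
    field_simp
    ring
  have hsum2 : ∑ k ∈ Finset.Ioc n (T-1),
      (g ((⌊(T : ℝ) * s⌋ : ℝ) / T) ((k : ℝ) / T)) ^ 2 / m ((k : ℝ) / T)
      = ∑ k ∈ Finset.Ioc n (T-1), (aa s T)^2 * ((T:ℝ) * (k:ℝ)⁻¹ - 1) := by
    refine Finset.sum_congr rfl fun k hk => ?_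
    simp only [Finset.mem_Ioc] at hk
    have hnk : (n:ℝ) < k := by exact_mod_cast hk.1
    have hn0 : (0:ℝ) < n := by exact_mod_cast (show 0 < n by omega)
    have hk0 : (0:ℝ) < k := by linarith
    have hkT : (k:ℝ) ≤ (T:ℝ) - 1 := by
      have h' : k + 1 ≤ T := by omega
      have : (k:ℝ) + 1 ≤ T := by exact_mod_cast h'
      linarith
    have hkT' : (k:ℝ) < T := by linarith
    have h1k : (0:ℝ) < 1 - (k:ℝ)/T := by
      rw [sub_pos, div_lt_one hTpos]; exact hkT'
    rw [hcast, g, m, aa, min_eq_left (by gcongr), max_eq_right (by gcongr)]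
    rw [div_eq_iff (by positivity)]
    field_simp
    ring
  rw [hsum1, hsum2]
  have c1 : (Finset.Ioc 0 n).card = n := by simp
  have c2 : (Finset.Ioc n (T-1)).card = T - 1 - n := by simp
  rw [← Finset.mul_sum, ← Finset.mul_sum, Finset.sum_sub_distrib, Finset.sum_sub_distrib,
    ← Finset.mul_sum, ← Finset.mul_sum, Finset.sum_const, Finset.sum_const, c1, c2]
  have hc : ((T - 1 - n : ℕ) : ℝ) = (T:ℝ) - 1 - n := by
    have h1 : n + 1 ≤ T - 1 := by omega
    have h2 : 1 ≤ T := by omega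
    push_cast [Nat.cast_sub (by omega : n ≤ T - 1), Nat.cast_sub (by omega : 1 ≤ T)]
    ring
  simp only [nsmul_eq_mul, mul_one, AA, BB, ← hn]
  rw [hc]

private lemma AA_bounds {T n : ℕ} (hT : n + 2 ≤ T) (hn : 1 ≤ n) :
    Real.log T - Real.log ((T:ℝ) - n) ≤ ∑ i ∈ Finset.range n, ((T:ℝ) - 1 - i)⁻¹ ∧
    ∑ i ∈ Finset.range n, ((T:ℝ) - 1 - i)⁻¹ ≤ Real.log ((T:ℝ) - 1) - Real.log ((T:ℝ) - 1 - n) := by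
  have key : ∀ i ∈ Finset.range n, (0:ℝ) < (T:ℝ) - 1 - n ∧ ((i:ℝ) + 3 ≤ T) := by
    intro i hi
    simp only [Finset.mem_range] at hi
    have h1 : i + 3 ≤ T := by omega
    have h2 : n + 2 ≤ T := hT
    constructor
    · have : (n:ℝ) + 2 ≤ T := by exact_mod_cast h2
      linarith
    · exact_mod_cast h1
  constructor
  · have tel := Finset.sum_range_sub' (fun i => Real.log ((T:ℝ) - i)) n
    simp only [Nat.cast_zero, sub_zero] at tel
    rw [← tel]
    apply Finset.sum_le_sum
    intro i hi
    simp only [Finset.mem_range] at hi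
    have hi3 : (i:ℝ) + 3 ≤ T := by exact_mod_cast (by omega : i + 3 ≤ T)
    have hc : (0:ℝ) < (T:ℝ) - 1 - i := by linarith
    have hTi : (0:ℝ) < (T:ℝ) - i := by linarith
    have e1 : (T:ℝ) - (i+1 : ℕ) = (T:ℝ) - 1 - i := by push_cast; ring
    rw [e1, ← Real.log_div hTi.ne' hc.ne']
    have := Real.log_le_sub_one_of_pos (show (0:ℝ) < ((T:ℝ) - i) / ((T:ℝ) - 1 - i) by positivity)
    have e2 : ((T:ℝ) - i) / ((T:ℝ) - 1 - i) - 1 = ((T:ℝ) - 1 - i)⁻¹ := by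
      field_simp
      ring
    linarith
  · have tel := Finset.sum_range_sub' (fun i => Real.log ((T:ℝ) - 1 - i)) n
    simp only [Nat.cast_zero, sub_zero] at tel
    rw [← tel]
    apply Finset.sum_le_sum
    intro i hi
    simp only [Finset.mem_range] at hi
    have hi3 : (i:ℝ) + 2 ≤ (n:ℝ) + 1 := by exact_mod_cast (by omega : i + 2 ≤ n + 1)
    have hnT : (n:ℝ) + 2 ≤ T := by exact_mod_cast hT
    have hc : (0:ℝ) < (T:ℝ) - 1 - i := by linarith
    have hc2 : (0:ℝ) < (T:ℝ) - 1 - (i+1:ℕ) := by push_cast; linarith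
    have e1 : (T:ℝ) - 1 - (i+1 : ℕ) = (T:ℝ) - 2 - i := by push_cast; ring
    rw [e1]
    rw [e1] at hc2
    rw [← Real.log_div hc.ne' (by linarith : ((T:ℝ) - 2 - i) ≠ 0)]
    have := Real.log_le_sub_one_of_pos (show (0:ℝ) < ((T:ℝ) - 2 - i) / ((T:ℝ) - 1 - i) by positivity)
    have hlog : Real.log (((T:ℝ) - 2 - i) / ((T:ℝ) - 1 - i)) = - Real.log (((T:ℝ) - 1 - i) / ((T:ℝ) - 2 - i)) := by
      rw [← Real.log_inv]
      congr 1
      field_simp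
    have e2 : ((T:ℝ) - 2 - i) / ((T:ℝ) - 1 - i) - 1 = -((T:ℝ) - 1 - i)⁻¹ := by
      field_simp
      ring
    rw [hlog] at this
    linarith

private lemma BB_bounds {T n : ℕ} (hT : n + 2 ≤ T) (hn : 1 ≤ n) :
    Real.log T - Real.log ((n:ℝ) + 1) ≤ ∑ i ∈ Finset.range (T - 1 - n), ((n:ℝ) + 1 + i)⁻¹ ∧
    ∑ i ∈ Finset.range (T - 1 - n), ((n:ℝ) + 1 + i)⁻¹ ≤ Real.log ((T:ℝ) - 1) - Real.log n := by
  have hcast : ((T - 1 - n : ℕ) : ℝ) = (T:ℝ) - 1 - n := by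
    push_cast [Nat.cast_sub (by omega : n ≤ T - 1), Nat.cast_sub (by omega : 1 ≤ T)]; ring
  constructor
  · have tel := Finset.sum_range_sub (fun i => Real.log ((n:ℝ) + 1 + i)) (T - 1 - n)
    simp only [Nat.cast_zero, add_zero] at tel
    rw [hcast] at tel
    have e0 : (n:ℝ) + 1 + ((T:ℝ) - 1 - n) = T := by ring
    rw [e0] at tel
    rw [← tel]
    apply Finset.sum_le_sum
    intro i hi
    have hc : (0:ℝ) < (n:ℝ) + 1 + i := by positivity
    have hc2 : (0:ℝ) < (n:ℝ) + 1 + (i+1:ℕ) := by positivity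
    rw [← Real.log_div hc2.ne' hc.ne']
    have := Real.log_le_sub_one_of_pos (show (0:ℝ) < ((n:ℝ) + 1 + (i+1:ℕ)) / ((n:ℝ) + 1 + i) by positivity)
    have e2 : ((n:ℝ) + 1 + (i+1:ℕ)) / ((n:ℝ) + 1 + i) - 1 = ((n:ℝ) + 1 + i)⁻¹ := by
      push_cast
      field_simp
      ring
    linarith
  · have tel := Finset.sum_range_sub (fun i => Real.log ((n:ℝ) + i)) (T - 1 - n)
    simp only [Nat.cast_zero, add_zero] at tel
    rw [hcast] at tel
    have e0 : (n:ℝ) + ((T:ℝ) - 1 - n) = (T:ℝ) - 1 := by ring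
    rw [e0] at tel
    rw [← tel]
    apply Finset.sum_le_sum
    intro i hi
    have hn' : (1:ℝ) ≤ n := by exact_mod_cast hn
    have hc : (0:ℝ) < (n:ℝ) + i := by positivity
    have hc1 : (0:ℝ) < (n:ℝ) + 1 + i := by positivity
    have e1 : (n:ℝ) + (i+1:ℕ) = (n:ℝ) + 1 + i := by push_cast; ring
    rw [e1, ← Real.log_div hc1.ne' hc.ne']
    have := Real.log_le_sub_one_of_pos (show (0:ℝ) < ((n:ℝ) + i) / ((n:ℝ) + 1 + i) by positivity)
    have hlog : Real.log (((n:ℝ) + i) / ((n:ℝ) + 1 + i)) = - Real.log (((n:ℝ) + 1 + i) / ((n:ℝ) + i)) := by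
      rw [← Real.log_inv]; congr 1; field_simp
    have e2 : ((n:ℝ) + i) / ((n:ℝ) + 1 + i) - 1 = -((n:ℝ) + 1 + i)⁻¹ := by
      field_simp
      ring
    rw [hlog] at this
    linarith

private lemma AA_eq (s : ℝ) (T : ℕ) :
    AA s T = ∑ i ∈ Finset.range (nn s T), ((T:ℝ) - 1 - i)⁻¹ := by
  rw [AA, show Finset.Ioc 0 (nn s T) = Finset.Ico 1 (nn s T + 1) by
    rw [Finset.Ico_add_one_right_eq_Icc, ← Finset.Icc_add_one_left_eq_Ioc]; rfl, Finset.sum_Ico_eq_sum_range]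
  simp only [Nat.add_sub_cancel]
  refine Finset.sum_congr rfl fun i _ => ?_
  push_cast
  ring_nf

private lemma BB_eq (s : ℝ) {T : ℕ} (hT : 1 ≤ T) :
    BB s T = ∑ i ∈ Finset.range (T - 1 - nn s T), ((nn s T : ℝ) + 1 + i)⁻¹ := by
  rw [BB, show Finset.Ioc (nn s T) (T - 1) = Finset.Ico (nn s T + 1) T by
    ext x; simp only [Finset.mem_Ioc, Finset.mem_Ico]; omega,
    Finset.sum_Ico_eq_sum_range, show T - (nn s T + 1) = T - 1 - nn s T by omega]
  refine Finset.sum_congr rfl fun i _ => ?_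
  push_cast
  ring_nf

private lemma log_ratio_tendsto {u v : ℕ → ℝ} {c : ℝ} (hc : 0 < c)
    (h : Tendsto (fun T => v T / u T) atTop (nhds c))
    (hu : ∀ᶠ T : ℕ in atTop, 0 < u T) (hv : ∀ᶠ T : ℕ in atTop, 0 < v T) :
    Tendsto (fun T => Real.log (u T) - Real.log (v T)) atTop (nhds (-Real.log c)) := by
  have h1 : Tendsto (fun T : ℕ => -Real.log (v T / u T)) atTop (nhds (-Real.log c)) :=
    ((Real.continuousAt_log hc.ne').tendsto.comp h).neg
  refine h1.congr' ?_
  filter_upwards [hu, hv] with T hu' hv'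
  rw [Real.log_div hv'.ne' hu'.ne']
  ring

private lemma hrr : Tendsto (fun T : ℕ => (T:ℝ)/((T:ℝ)-1)) atTop (nhds 1) := by
  have h0 : Tendsto (fun T : ℕ => (T:ℝ) + (-1)) atTop atTop :=
    tendsto_atTop_add_const_right _ (-1) tendsto_natCast_atTop_atTop
  have h1 : Tendsto (fun T : ℕ => ((T:ℝ) - 1)⁻¹) atTop (nhds 0) := by
    simpa [sub_eq_add_neg, Function.comp_def] using tendsto_inv_atTop_zero.comp h0
  have h2 : Tendsto (fun T : ℕ => 1 + ((T:ℝ) - 1)⁻¹) atTop (nhds 1) := by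
    simpa using tendsto_const_nhds.add h1
  refine h2.congr' ?_
  filter_upwards [eventually_ge_atTop 2] with T hT
  have hT' : (2:ℝ) ≤ T := by exact_mod_cast hT
  have hne : (T:ℝ) - 1 ≠ 0 := by linarith
  field_simp
  ring

private lemma hinvT : Tendsto (fun T : ℕ => ((T:ℝ))⁻¹) atTop (nhds 0) := by
  exact tendsto_inv_atTop_zero.comp tendsto_natCast_atTop_atTop

theorem stmt8 (s : ℝ) (hs : s ∈ Set.Ioo (0 : ℝ) 1) :
    Filter.Tendsto
      (fun T : ℕ =>
        ((T : ℝ) - 1)⁻¹ *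
          ∑ k ∈ Finset.Icc 1 (T - 1),
            (g ((⌊(T : ℝ) * s⌋ : ℝ) / T) ((k : ℝ) / T)) ^ 2 / m ((k : ℝ) / T))
      Filter.atTop
      (nhds (-(s ^ 2 * Real.log s + (1 - s) ^ 2 * Real.log (1 - s) + m s))) := by
  have hs0 := hs.1
  have hs1 := hs.2
  have h1s : (0:ℝ) < 1 - s := by linarith
  have haa := tendsto_aa hs
  have hev := ev_nn hs
  -- eventual positivity facts
  have hevT : ∀ᶠ T : ℕ in atTop, 2 ≤ nn s T ∧ nn s T + 2 ≤ T ∧ 2 ≤ T := by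
    filter_upwards [hev, eventually_ge_atTop 2] with T h h2
    exact ⟨h.1, h.2, h2⟩
  -- ratio tendstos
  have hratio1 : Tendsto (fun T : ℕ => ((T:ℝ) - nn s T)/(T:ℝ)) atTop (nhds (1 - s)) := by
    refine (tendsto_const_nhds.sub haa).congr' ?_
    filter_upwards [eventually_ge_atTop 1] with T hT
    have hT' : (0:ℝ) < T := by exact_mod_cast hT
    rw [aa]
    field_simp
  have huu : Tendsto (fun T : ℕ => ((T:ℝ) - 1 - nn s T)/((T:ℝ) - 1)) atTop (nhds (1 - s)) := by
    have h0 : Tendsto (fun T : ℕ => (1 - aa s T - ((T:ℝ))⁻¹) * ((T:ℝ)/((T:ℝ)-1)))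
        atTop (nhds ((1 - s - 0) * 1)) :=
      ((tendsto_const_nhds.sub haa).sub hinvT).mul hrr
    simp only [sub_zero, mul_one] at h0
    refine h0.congr' ?_
    filter_upwards [eventually_ge_atTop 2] with T hT
    have hT' : (2:ℝ) ≤ T := by exact_mod_cast hT
    have hne : (T:ℝ) - 1 ≠ 0 := by linarith
    have hne0 : (T:ℝ) ≠ 0 := by linarith
    rw [aa]
    field_simp
    ring
  have hratio3 : Tendsto (fun T : ℕ => ((nn s T : ℝ) + 1)/(T:ℝ)) atTop (nhds s) := by
    have h0 : Tendsto (fun T : ℕ => aa s T + ((T:ℝ))⁻¹) atTop (nhds (s + 0)) := haa.add hinvT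
    simp only [add_zero] at h0
    refine h0.congr' ?_
    filter_upwards [eventually_ge_atTop 1] with T hT
    have hT' : (0:ℝ) < T := by exact_mod_cast hT
    rw [aa]
    field_simp
  have hratio4 : Tendsto (fun T : ℕ => (nn s T : ℝ)/((T:ℝ) - 1)) atTop (nhds s) := by
    have h0 : Tendsto (fun T : ℕ => aa s T * ((T:ℝ)/((T:ℝ)-1))) atTop (nhds (s * 1)) :=
      haa.mul hrr
    simp only [mul_one] at h0
    refine h0.congr' ?_
    filter_upwards [eventually_ge_atTop 2] with T hT
    have hT' : (2:ℝ) ≤ T := by exact_mod_cast hT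
    have hne : (T:ℝ) - 1 ≠ 0 := by linarith
    have hne0 : (T:ℝ) ≠ 0 := by linarith
    rw [aa]
    field_simp
  -- positivity eventualities
  have hposT : ∀ᶠ T : ℕ in atTop, (0:ℝ) < T := by
    filter_upwards [eventually_ge_atTop 1] with T hT; exact_mod_cast hT
  have hposT1 : ∀ᶠ T : ℕ in atTop, (0:ℝ) < (T:ℝ) - 1 := by
    filter_upwards [eventually_ge_atTop 2] with T hT
    have : (2:ℝ) ≤ T := by exact_mod_cast hT
    linarith
  have hposTn : ∀ᶠ T : ℕ in atTop, (0:ℝ) < (T:ℝ) - nn s T := by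
    filter_upwards [hev] with T h
    have : (nn s T : ℝ) + 2 ≤ T := by exact_mod_cast h.2
    linarith
  have hposT1n : ∀ᶠ T : ℕ in atTop, (0:ℝ) < (T:ℝ) - 1 - nn s T := by
    filter_upwards [hev] with T h
    have : (nn s T : ℝ) + 2 ≤ T := by exact_mod_cast h.2
    linarith
  have hposn1 : ∀ᶠ T : ℕ in atTop, (0:ℝ) < (nn s T : ℝ) + 1 := by
    filter_upwards [] with T; positivity
  have hposn : ∀ᶠ T : ℕ in atTop, (0:ℝ) < (nn s T : ℝ) := by
    filter_upwards [hev] with T h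
    have : (2:ℝ) ≤ (nn s T : ℝ) := by exact_mod_cast h.1
    linarith
  -- AA tendsto
  have hAA : Tendsto (AA s) atTop (nhds (-Real.log (1 - s))) := by
    refine tendsto_of_tendsto_of_tendsto_of_le_of_le'
      (log_ratio_tendsto h1s hratio1 hposT hposTn)
      (log_ratio_tendsto h1s huu hposT1 hposT1n) ?_ ?_
    · filter_upwards [hev] with T h
      rw [AA_eq]
      exact (AA_bounds h.2 (by omega)).1
    · filter_upwards [hev] with T h
      rw [AA_eq]
      exact (AA_bounds h.2 (by omega)).2
  -- BB tendsto
  have hBB : Tendsto (BB s) atTop (nhds (-Real.log s)) := by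
    refine tendsto_of_tendsto_of_tendsto_of_le_of_le'
      (log_ratio_tendsto hs0 hratio3 hposT hposn1)
      (log_ratio_tendsto hs0 hratio4 hposT1 hposn) ?_ ?_
    · filter_upwards [hev] with T h
      rw [BB_eq s (by omega)]
      exact (BB_bounds h.2 (by omega)).1
    · filter_upwards [hev] with T h
      rw [BB_eq s (by omega)]
      exact (BB_bounds h.2 (by omega)).2
  -- assemble
  have hF : Tendsto (fun T : ℕ =>
      (1 - aa s T)^2 * ((T:ℝ)/((T:ℝ)-1) * AA s T - aa s T * ((T:ℝ)/((T:ℝ)-1)))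
      + (aa s T)^2 * ((T:ℝ)/((T:ℝ)-1) * BB s T - ((T:ℝ)-1-(nn s T:ℝ))/((T:ℝ)-1)))
      atTop
      (nhds ((1-s)^2 * (1 * (-Real.log (1-s)) - s * 1) + s^2 * (1 * (-Real.log s) - (1-s)))) :=
    (((tendsto_const_nhds.sub haa).pow 2).mul ((hrr.mul hAA).sub (haa.mul hrr))).add
      ((haa.pow 2).mul ((hrr.mul hBB).sub huu))
  have hlim : ((1-s)^2 * (1 * (-Real.log (1-s)) - s * 1) + s^2 * (1 * (-Real.log s) - (1-s)))
      = -(s ^ 2 * Real.log s + (1 - s) ^ 2 * Real.log (1 - s) + m s) := by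
    rw [m]; ring
  rw [hlim] at hF
  refine hF.congr' ?_
  filter_upwards [hevT] with T h
  obtain ⟨h2, hTn, hT2⟩ := h
  rw [sum_eq hs h2 hTn]
  have hT' : (2:ℝ) ≤ T := by exact_mod_cast hT2
  have hT0 : (T:ℝ) ≠ 0 := by linarith
  have hT1 : (T:ℝ) - 1 ≠ 0 := by linarith
  rw [aa, eq_inv_mul_iff_mul_eq₀ hT1]
  field_simp
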